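/- Let μ be a probability distribution on subsets of [n] such that both μ and its dual μ* (defined by μ*(S) = μ([n]∖S)) have log-concave generating polynomials. Then (1/2)·Σᵢ H(μᵢ) ≤ H(μ) ≤ Σᵢ H(μᵢ), where μᵢ are the marginals of μ and H(p) = p log(1/p) + (1−p) log(1/(1−p)). -/

import Mathlib

/-- The Shannon entropy of a distribution on subsets of `[n]`
(with the convention `0 · log (1/0) = 0`, automatic since `Real.log 0 = 0`). -/
noncomputable def setEntropy {n : ℕ} (μ : Finset (Fin n) → ℝ) : ℝ :=
  ∑ S : Finset (Fin n), μ S * Real.log (1 / μ S)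

/-- The marginal probability `μᵢ = P_{S∼μ}[i ∈ S]`. -/
noncomputable def marginal {n : ℕ} (μ : Finset (Fin n) → ℝ) (i : Fin n) : ℝ :=
  ∑ S : Finset (Fin n), if i ∈ S then μ S else 0

/-- Binary entropy `H(p) = p log(1/p) + (1-p) log(1/(1-p))`. -/
noncomputable def binEntropy (p : ℝ) : ℝ :=
  p * Real.log (1 / p) + (1 - p) * Real.log (1 / (1 - p))

/-- The multiaffine generating polynomial of `μ`, as a function. -/
noncomputable def genFun {n : ℕ} (μ : Finset (Fin n) → ℝ) (z : Fin n → ℝ) : ℝ :=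
  ∑ S : Finset (Fin n), μ S * ∏ i ∈ S, z i

/-- A function on subsets of `[n]` is log-concave if its generating polynomial is a
log-concave function on the positive orthant. -/
def SetLogConcave {n : ℕ} (μ : Finset (Fin n) → ℝ) : Prop :=
  ∀ v w : Fin n → ℝ, (∀ i, 0 ≤ v i) → (∀ i, 0 ≤ w i) →
    ∀ l : ℝ, 0 ≤ l → l ≤ 1 →
      (genFun μ v) ^ l * (genFun μ w) ^ (1 - l) ≤ genFun μ (l • v + (1 - l) • w)

open Finset

section EntropyAux
variable {n : ℕ} {μ : Finset (Fin n) → ℝ}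

lemma marginal_nonneg (hnn : ∀ S, 0 ≤ μ S) (i : Fin n) : 0 ≤ marginal μ i :=
  Finset.sum_nonneg fun S _ => by split <;> simp [hnn S]

lemma one_sub_marginal (hsum : ∑ S : Finset (Fin n), μ S = 1) (i : Fin n) :
    1 - marginal μ i = ∑ S : Finset (Fin n), if i ∈ S then 0 else μ S := by
  rw [← hsum, marginal, ← Finset.sum_sub_distrib]
  exact Finset.sum_congr rfl fun S _ => by split <;> ring

lemma one_sub_marginal_nonneg (hnn : ∀ S, 0 ≤ μ S)
    (hsum : ∑ S : Finset (Fin n), μ S = 1) (i : Fin n) : 0 ≤ 1 - marginal μ i := by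
  rw [one_sub_marginal hsum]
  exact Finset.sum_nonneg fun S _ => by split <;> simp [hnn S]

lemma sum_supp_eq (hnn : ∀ S, 0 ≤ μ S) (f : Finset (Fin n) → ℝ) :
    ∑ S ∈ Finset.univ.filter (fun S => 0 < μ S), μ S * f S = ∑ S : Finset (Fin n), μ S * f S := by
  apply Finset.sum_subset (Finset.filter_subset _ _)
  intro S _ hS
  have : μ S = 0 := le_antisymm (by simpa [not_lt] using (Finset.mem_filter.not.mp hS)) (hnn S)
  simp [this]

lemma sum_supp_ite_eq (hnn : ∀ S, 0 ≤ μ S) (i : Fin n) :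
    ∑ S ∈ Finset.univ.filter (fun S => 0 < μ S), (if i ∈ S then μ S else 0) = marginal μ i := by
  apply Finset.sum_subset (Finset.filter_subset _ _)
  intro S _ hS
  have : μ S = 0 := le_antisymm (by simpa [not_lt] using (Finset.mem_filter.not.mp hS)) (hnn S)
  simp [this]

lemma sum_supp_one (hnn : ∀ S, 0 ≤ μ S) (hsum : ∑ S : Finset (Fin n), μ S = 1) :
    ∑ S ∈ Finset.univ.filter (fun S => 0 < μ S), μ S = 1 := by
  rw [← hsum]
  apply Finset.sum_subset (Finset.filter_subset _ _)
  intro S _ hS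
  exact le_antisymm (by simpa [not_lt] using (Finset.mem_filter.not.mp hS)) (hnn S)

lemma marginal_pos_of_mem (hnn : ∀ S, 0 ≤ μ S) {S : Finset (Fin n)} (hS : 0 < μ S)
    {i : Fin n} (hi : i ∈ S) : 0 < marginal μ i := by
  have h := Finset.single_le_sum (f := fun T : Finset (Fin n) => if i ∈ T then μ T else 0)
    (fun T _ => by split <;> simp [hnn T]) (Finset.mem_univ S)
  simp only [if_pos hi] at h
  exact lt_of_lt_of_le hS h

lemma one_sub_marginal_pos (hnn : ∀ S, 0 ≤ μ S) (hsum : ∑ S : Finset (Fin n), μ S = 1)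
    {S : Finset (Fin n)} (hS : 0 < μ S) {i : Fin n} (hi : i ∉ S) : 0 < 1 - marginal μ i := by
  rw [one_sub_marginal hsum]
  have h := Finset.single_le_sum (f := fun T : Finset (Fin n) => if i ∈ T then 0 else μ T)
    (fun T _ => by split <;> simp [hnn T]) (Finset.mem_univ S)
  simp only [if_neg hi] at h
  exact lt_of_lt_of_le hS h

lemma genFun_nonneg (hnn : ∀ S, 0 ≤ μ S) {z : Fin n → ℝ} (hz : ∀ i, 0 ≤ z i) :
    0 ≤ genFun μ z :=
  Finset.sum_nonneg fun S _ => mul_nonneg (hnn S) (Finset.prod_nonneg fun i _ => hz i)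


lemma concave_log_genFun (μ : Finset (Fin n) → ℝ) (hlc : SetLogConcave μ) :
    ConcaveOn ℝ {x : Fin n → ℝ | (∀ i, 0 ≤ x i) ∧ 0 < genFun μ x}
      (fun x => Real.log (genFun μ x)) := by
  have key : ∀ x ∈ {x : Fin n → ℝ | (∀ i, 0 ≤ x i) ∧ 0 < genFun μ x},
      ∀ y ∈ {x : Fin n → ℝ | (∀ i, 0 ≤ x i) ∧ 0 < genFun μ x},
      ∀ a b : ℝ, 0 ≤ a → 0 ≤ b → a + b = 1 →
        0 < genFun μ x ^ a * genFun μ y ^ b ∧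
          genFun μ x ^ a * genFun μ y ^ b ≤ genFun μ (a • x + b • y) := by
    intro x hx y hy a b ha hb hab
    have hb' : b = 1 - a := by linarith
    constructor
    · exact mul_pos (Real.rpow_pos_of_pos hx.2 a) (Real.rpow_pos_of_pos hy.2 b)
    · rw [hb']
      exact hlc x y hx.1 hy.1 a ha (by linarith)
  constructor
  · intro x hx y hy a b ha hb hab
    refine ⟨fun i => ?_, ?_⟩
    · exact add_nonneg (mul_nonneg ha (hx.1 i)) (mul_nonneg hb (hy.1 i))
    · exact lt_of_lt_of_le (key x hx y hy a b ha hb hab).1 (key x hx y hy a b ha hb hab).2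
  · intro x hx y hy a b ha hb hab
    obtain ⟨hpos, hle⟩ := key x hx y hy a b ha hb hab
    calc a • Real.log (genFun μ x) + b • Real.log (genFun μ y)
        = Real.log (genFun μ x ^ a * genFun μ y ^ b) := by
          rw [Real.log_mul (ne_of_gt (Real.rpow_pos_of_pos hx.2 a))
            (ne_of_gt (Real.rpow_pos_of_pos hy.2 b)),
            Real.log_rpow hx.2, Real.log_rpow hy.2, smul_eq_mul, smul_eq_mul]
      _ ≤ Real.log (genFun μ (a • x + b • y)) := Real.log_le_log hpos hle

lemma entropy_lower (hnn : ∀ S, 0 ≤ μ S) (hsum : ∑ S : Finset (Fin n), μ S = 1)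
    (hlc : SetLogConcave μ) :
    ∑ i : Fin n, marginal μ i * Real.log (1 / marginal μ i) ≤ setEntropy μ := by
  classical
  set t := Finset.univ.filter (fun S => 0 < μ S) with ht
  set m : Fin n → ℝ := marginal μ with hm
  set f : Fin n → ℝ := fun i => Real.log (m i)⁻¹ with hf
  set p : Finset (Fin n) → (Fin n → ℝ) := fun S i => if i ∈ S then (m i)⁻¹ else 0 with hp
  have hμt : ∀ S ∈ t, 0 < μ S := fun S hS => (Finset.mem_filter.mp hS).2
  have hpnn : ∀ S i, 0 ≤ p S i := fun S i => by
    simp only [hp]; split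
    · exact inv_nonneg.mpr (marginal_nonneg hnn i)
    · exact le_refl 0
  have hprod : ∀ S : Finset (Fin n), (∏ i ∈ S, p S i) = ∏ i ∈ S, (m i)⁻¹ :=
    fun S => Finset.prod_congr rfl fun i hi => if_pos hi
  have hterm : ∀ S ∈ t, 0 < μ S * ∏ i ∈ S, (m i)⁻¹ := fun S hS =>
    mul_pos (hμt S hS) (Finset.prod_pos fun i hi =>
      inv_pos.mpr (marginal_pos_of_mem hnn (hμt S hS) hi))
  have hgp : ∀ S ∈ t, μ S * ∏ i ∈ S, (m i)⁻¹ ≤ genFun μ (p S) := by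
    intro S hS
    have h := Finset.single_le_sum (f := fun T : Finset (Fin n) => μ T * ∏ i ∈ T, p S i)
      (fun T _ => mul_nonneg (hnn T) (Finset.prod_nonneg fun i _ => hpnn S i))
      (Finset.mem_univ S)
    rw [hprod S] at h
    exact h
  have hgppos : ∀ S ∈ t, 0 < genFun μ (p S) := fun S hS =>
    lt_of_lt_of_le (hterm S hS) (hgp S hS)
  have hmem : ∀ S ∈ t, p S ∈ {x : Fin n → ℝ | (∀ i, 0 ≤ x i) ∧ 0 < genFun μ x} :=
    fun S hS => ⟨hpnn S, hgppos S hS⟩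
  -- Step B
  have hB : ∀ S ∈ t, (∑ i ∈ S, f i) ≤ Real.log (genFun μ (p S)) + Real.log (μ S)⁻¹ := by
    intro S hS
    have hlog : Real.log (μ S * ∏ i ∈ S, (m i)⁻¹) ≤ Real.log (genFun μ (p S)) :=
      Real.log_le_log (hterm S hS) (hgp S hS)
    rw [Real.log_mul (ne_of_gt (hμt S hS))
        (ne_of_gt (Finset.prod_pos fun i hi =>
          inv_pos.mpr (marginal_pos_of_mem hnn (hμt S hS) hi))),
      Real.log_prod (fun i hi =>
        ne_of_gt (inv_pos.mpr (marginal_pos_of_mem hnn (hμt S hS) hi)))] at hlog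
    have : Real.log (μ S)⁻¹ = - Real.log (μ S) := Real.log_inv _
    simp only [hf]
    linarith
  -- Step A (swap)
  have hA : ∑ S ∈ t, μ S * ∑ i ∈ S, f i = ∑ i : Fin n, m i * f i := by
    have h1 : ∀ S : Finset (Fin n), μ S * ∑ i ∈ S, f i
        = ∑ i : Fin n, (if i ∈ S then μ S * f i else 0) := by
      intro S
      rw [Finset.sum_ite_mem, Finset.univ_inter, Finset.mul_sum]
    calc ∑ S ∈ t, μ S * ∑ i ∈ S, f i
        = ∑ S ∈ t, ∑ i : Fin n, (if i ∈ S then μ S * f i else 0) :=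
          Finset.sum_congr rfl fun S _ => h1 S
      _ = ∑ i : Fin n, ∑ S ∈ t, (if i ∈ S then μ S * f i else 0) := Finset.sum_comm
      _ = ∑ i : Fin n, (∑ S ∈ t, (if i ∈ S then μ S else 0)) * f i := by
          refine Finset.sum_congr rfl fun i _ => ?_
          rw [Finset.sum_mul]
          exact Finset.sum_congr rfl fun S _ => by split <;> ring
      _ = ∑ i : Fin n, m i * f i := by
          refine Finset.sum_congr rfl fun i _ => ?_
          rw [sum_supp_ite_eq hnn i]
  -- Step D : Jensen + center bound
  have hD : ∑ S ∈ t, μ S * Real.log (genFun μ (p S)) ≤ 0 := by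
    have hJ := (concave_log_genFun μ hlc).le_map_sum (t := t) (w := μ) (p := p)
      (fun S _ => hnn S) (sum_supp_one hnn hsum) hmem
    simp only [smul_eq_mul] at hJ
    set c : Fin n → ℝ := ∑ S ∈ t, μ S • p S with hc
    have hcj : ∀ j, c j = ∑ S ∈ t, μ S * p S j := by
      intro j
      rw [hc, Finset.sum_apply]
      exact Finset.sum_congr rfl fun S _ => rfl
    have hc0 : ∀ j, 0 ≤ c j := fun j => by
      rw [hcj]; exact Finset.sum_nonneg fun S _ => mul_nonneg (hnn S) (hpnn S j)
    have hc1 : ∀ j, c j ≤ 1 := by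
      intro j
      rw [hcj]
      have : ∑ S ∈ t, μ S * p S j = (∑ S ∈ t, (if j ∈ S then μ S else 0)) * (m j)⁻¹ := by
        rw [Finset.sum_mul]
        refine Finset.sum_congr rfl fun S _ => ?_
        simp only [hp]; split <;> ring
      rw [this, sum_supp_ite_eq hnn j]
      rcases eq_or_lt_of_le (marginal_nonneg hnn j) with h | h
      · rw [hm, ← h]; simp
      · rw [mul_inv_cancel₀ (ne_of_gt h)]
    have hgc : genFun μ c ≤ 1 := by
      rw [genFun, ← hsum]
      refine Finset.sum_le_sum fun T _ => ?_
      exact mul_le_of_le_one_right (hnn T)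
        (Finset.prod_le_one (fun i _ => hc0 i) (fun i _ => hc1 i))
    have hlogc : Real.log (genFun μ c) ≤ 0 :=
      Real.log_nonpos (genFun_nonneg hnn hc0) hgc
    exact le_trans hJ hlogc
  -- assemble
  have hent : ∑ S ∈ t, μ S * Real.log (μ S)⁻¹ = setEntropy μ := by
    rw [setEntropy]
    simp only [one_div]
    exact sum_supp_eq hnn _
  calc ∑ i : Fin n, marginal μ i * Real.log (1 / marginal μ i)
      = ∑ i : Fin n, m i * f i := by simp only [hf, hm, one_div]
    _ = ∑ S ∈ t, μ S * ∑ i ∈ S, f i := hA.symm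
    _ ≤ ∑ S ∈ t, μ S * (Real.log (genFun μ (p S)) + Real.log (μ S)⁻¹) :=
        Finset.sum_le_sum fun S hS =>
          mul_le_mul_of_nonneg_left (hB S hS) (hnn S)
    _ = (∑ S ∈ t, μ S * Real.log (genFun μ (p S))) + ∑ S ∈ t, μ S * Real.log (μ S)⁻¹ := by
        rw [← Finset.sum_add_distrib]
        exact Finset.sum_congr rfl fun S _ => by ring
    _ ≤ 0 + setEntropy μ := by rw [hent]; exact add_le_add hD le_rfl
    _ = setEntropy μ := zero_add _

lemma entropy_upper (hnn : ∀ S, 0 ≤ μ S) (hsum : ∑ S : Finset (Fin n), μ S = 1) :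
    setEntropy μ ≤ ∑ i : Fin n, _root_.binEntropy (marginal μ i) := by
  classical
  set t := Finset.univ.filter (fun S => 0 < μ S) with ht
  set m : Fin n → ℝ := marginal μ with hm
  set q : Finset (Fin n) → ℝ :=
    fun S => ∏ i : Fin n, (if i ∈ S then m i else 1 - m i) with hq
  have hμt : ∀ S ∈ t, 0 < μ S := fun S hS => (Finset.mem_filter.mp hS).2
  have hfac_pos : ∀ S ∈ t, ∀ i : Fin n, 0 < (if i ∈ S then m i else 1 - m i) := by
    intro S hS i
    by_cases h : i ∈ S
    · rw [if_pos h]; exact marginal_pos_of_mem hnn (hμt S hS) h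
    · rw [if_neg h]; exact one_sub_marginal_pos hnn hsum (hμt S hS) h
  have hq_pos : ∀ S ∈ t, 0 < q S := fun S hS =>
    Finset.prod_pos fun i _ => hfac_pos S hS i
  have hq_nonneg : ∀ S : Finset (Fin n), 0 ≤ q S := by
    intro S
    refine Finset.prod_nonneg fun i _ => ?_
    by_cases h : i ∈ S
    · rw [if_pos h]; exact marginal_nonneg hnn i
    · rw [if_neg h]; exact one_sub_marginal_nonneg hnn hsum i
  -- total mass of q is 1
  have hqsum : ∑ S : Finset (Fin n), q S = 1 := by
    have hpa := Finset.prod_add m (fun i => 1 - m i) (Finset.univ : Finset (Fin n))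
    have hL : ∏ i : Fin n, (m i + (1 - m i)) = 1 := by
      rw [Finset.prod_congr rfl (fun i _ => by ring : ∀ i ∈ Finset.univ, m i + (1 - m i) = (1:ℝ))]
      exact Finset.prod_const_one
    rw [hL, Finset.powerset_univ] at hpa
    refine Eq.trans (Finset.sum_congr rfl fun S _ => ?_) hpa.symm
    simp only [hq]
    rw [← Finset.prod_sdiff (Finset.subset_univ S)]
    rw [Finset.prod_congr rfl (fun i hi => if_pos hi : ∀ i ∈ S, (if i ∈ S then m i else 1 - m i) = m i),
      Finset.prod_congr rfl (fun i hi => if_neg (Finset.mem_sdiff.mp hi).2 :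
        ∀ i ∈ Finset.univ \ S, (if i ∈ S then m i else 1 - m i) = 1 - m i)]
    ring
  have hqsum_t : ∑ S ∈ t, q S ≤ 1 := by
    rw [← hqsum]
    exact Finset.sum_le_sum_of_subset_of_nonneg (Finset.filter_subset _ _)
      fun S _ _ => hq_nonneg S
  -- Gibbs via Jensen for log
  have hGibbs : ∑ S ∈ t, μ S * Real.log (q S / μ S) ≤ 0 := by
    have hJ := (strictConcaveOn_log_Ioi.concaveOn).le_map_sum (t := t) (w := μ)
      (p := fun S => q S / μ S) (fun S _ => hnn S) (sum_supp_one hnn hsum)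
      (fun S hS => Set.mem_Ioi.mpr (div_pos (hq_pos S hS) (hμt S hS)))
    simp only [smul_eq_mul] at hJ
    have heq : ∑ S ∈ t, μ S * (q S / μ S) = ∑ S ∈ t, q S :=
      Finset.sum_congr rfl fun S hS => by
        rw [mul_comm, div_mul_cancel₀ _ (ne_of_gt (hμt S hS))]
    rw [heq] at hJ
    refine le_trans hJ (Real.log_nonpos ?_ hqsum_t)
    exact Finset.sum_nonneg fun S _ => hq_nonneg S
  -- split entropy
  have hent : setEntropy μ = ∑ S ∈ t, μ S * Real.log (μ S)⁻¹ := by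
    rw [setEntropy]
    simp only [one_div]
    exact (sum_supp_eq hnn _).symm
  have hsplit : ∀ S ∈ t, Real.log (μ S)⁻¹ = Real.log (q S / μ S) + Real.log (q S)⁻¹ := by
    intro S hS
    rw [Real.log_div (ne_of_gt (hq_pos S hS)) (ne_of_gt (hμt S hS)),
      Real.log_inv, Real.log_inv]
    ring
  have hstep : setEntropy μ ≤ ∑ S ∈ t, μ S * Real.log (q S)⁻¹ := by
    rw [hent, Finset.sum_congr rfl (fun S hS => by rw [hsplit S hS, mul_add])]
    rw [Finset.sum_add_distrib]
    nlinarith [hGibbs]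
  refine le_trans hstep (le_of_eq ?_)
  -- compute ∑ S ∈ t, μ S * log (q S)⁻¹ = ∑ i, binEntropy (m i)
  have hlogq : ∀ S ∈ t, Real.log (q S)⁻¹
      = ∑ i : Fin n, -Real.log (if i ∈ S then m i else 1 - m i) := by
    intro S hS
    rw [Real.log_inv, hq, Real.log_prod (fun i _ => ne_of_gt (hfac_pos S hS i))]
    rw [Finset.sum_neg_distrib]
  calc ∑ S ∈ t, μ S * Real.log (q S)⁻¹
      = ∑ S ∈ t, ∑ i : Fin n, μ S * -Real.log (if i ∈ S then m i else 1 - m i) := by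
        refine Finset.sum_congr rfl fun S hS => ?_
        rw [hlogq S hS, Finset.mul_sum]
    _ = ∑ i : Fin n, ∑ S ∈ t, μ S * -Real.log (if i ∈ S then m i else 1 - m i) :=
        Finset.sum_comm
    _ = ∑ i : Fin n, _root_.binEntropy (m i) := by
        refine Finset.sum_congr rfl fun i _ => ?_
        have hper : ∀ S ∈ t, μ S * -Real.log (if i ∈ S then m i else 1 - m i)
            = (if i ∈ S then μ S else 0) * -Real.log (m i)
              + (μ S - (if i ∈ S then μ S else 0)) * -Real.log (1 - m i) := by
          intro S _
          split <;> ring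
        rw [Finset.sum_congr rfl hper, Finset.sum_add_distrib,
          ← Finset.sum_mul, ← Finset.sum_mul, Finset.sum_sub_distrib,
          sum_supp_ite_eq hnn i, sum_supp_one hnn hsum]
        rw [_root_.binEntropy, one_div, one_div, Real.log_inv, Real.log_inv]

end EntropyAux

/-- If both `μ` and its dual `μ*` (with `μ*(S) = μ([n]∖S)`) have log-concave generating
polynomials, then `(1/2) ∑ᵢ H(μᵢ) ≤ H(μ) ≤ ∑ᵢ H(μᵢ)`. -/
theorem setEntropy_factor_two_approx
    {n : ℕ} (μ : Finset (Fin n) → ℝ)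
    (hnn : ∀ S, 0 ≤ μ S) (hsum : ∑ S : Finset (Fin n), μ S = 1)
    (hlc : SetLogConcave μ)
    (hlcdual : SetLogConcave (fun S => μ Sᶜ)) :
    (1 / 2) * ∑ i : Fin n, binEntropy (marginal μ i) ≤ setEntropy μ ∧
      setEntropy μ ≤ ∑ i : Fin n, binEntropy (marginal μ i) := by
  classical
  have hdnn : ∀ S : Finset (Fin n), 0 ≤ (fun S => μ Sᶜ) S := fun S => hnn _
  have hbij : Function.Bijective (fun S : Finset (Fin n) => Sᶜ) :=
    Function.Involutive.bijective (fun S => compl_compl S)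
  have hdsum : ∑ S : Finset (Fin n), (fun S => μ Sᶜ) S = 1 := by
    rw [← hsum]
    exact Fintype.sum_bijective _ hbij _ _ (fun S => rfl)
  have hdH : setEntropy (fun S => μ Sᶜ) = setEntropy μ := by
    simp only [setEntropy]
    exact Fintype.sum_bijective _ hbij _ _ (fun S => rfl)
  have hdmarg : ∀ i : Fin n, marginal (fun S => μ Sᶜ) i = 1 - marginal μ i := by
    intro i
    rw [one_sub_marginal hsum i]
    simp only [marginal]
    exact Fintype.sum_bijective _ hbij _ _
      (fun S => by by_cases h : i ∈ S <;> simp [h])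
  have L1 := entropy_lower hnn hsum hlc
  have L2 := entropy_lower hdnn hdsum hlcdual
  rw [hdH] at L2
  simp only [hdmarg] at L2
  constructor
  · have hbe : ∑ i : Fin n, binEntropy (marginal μ i)
        = (∑ i : Fin n, marginal μ i * Real.log (1 / marginal μ i))
          + ∑ i : Fin n, (1 - marginal μ i) * Real.log (1 / (1 - marginal μ i)) := by
      rw [← Finset.sum_add_distrib]
      exact Finset.sum_congr rfl fun i _ => rfl
    linarith
  · exact entropy_upper hnn hsum
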